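/- Let J > 0 and h > 0, let G = (V,E) and G̃ = (Ṽ,Ẽ) be finite connected multigraphs with |Ṽ| ≥ |V|, and let ι : V → Ṽ be an injection such that the symmetric difference of Ẽ and the image of E under ι contains at most k edges (counted with multiplicity). Then |Γ*(G) − Γ*(G̃)| ≤ J·k + h·(|Ṽ| − |V|). -/

import Mathlib

/-- Spin value of a Boolean: `+1` for `true`, `−1` for `false`. -/
def spin (b : Bool) : ℝ := if b then 1 else -1

/-- The product of the spins at the two endpoints of an unoriented edge. -/
noncomputable def edgeEnergy {V : Type*} (σ : V → Bool) : Sym2 V → ℝ :=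
  Sym2.lift ⟨fun v w => spin (σ v) * spin (σ w), fun v w => by ring⟩

/-- The Hamiltonian `H(σ) = −(J/2)·Σ_{(v,w)∈E} σ(v)σ(w) − (h/2)·Σ_v σ(v)` of a
multigraph with edge multiset `E` (edges counted with multiplicity). -/
noncomputable def hamiltonian {V : Type*} [Fintype V] (J h : ℝ)
    (E : Multiset (Sym2 V)) (σ : V → Bool) : ℝ :=
  -(J/2) * (E.map (edgeEnergy σ)).sum - (h/2) * ∑ v, spin (σ v)

/-- Two spin configurations differ at exactly one vertex. -/
def IsFlipStep {V : Type*} [DecidableEq V] (σ τ : V → Bool) : Prop :=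
  ∃ v, τ = Function.update σ v (! σ v)

/-- The communication height `Φ(ξ,ζ)`: the minimum over paths `γ : ξ → ζ` of
single spin-flips of the maximal energy along the path. -/
noncomputable def commHeight {V : Type*} [Fintype V] [DecidableEq V]
    (H : (V → Bool) → ℝ) (ξ ζ : V → Bool) : ℝ :=
  sInf { M : ℝ | ∃ (k : ℕ) (γ : Fin (k+1) → (V → Bool)),
    γ 0 = ξ ∧ γ (Fin.last k) = ζ ∧
    (∀ i : Fin k, IsFlipStep (γ i.castSucc) (γ i.succ)) ∧
    M = Finset.univ.sup' ⟨0, Finset.mem_univ 0⟩ (fun i => H (γ i)) }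

/-- The energy barrier `Γ* = Φ(⊟,⊞) − H(⊟)` of an energy landscape `H` on spin
configurations. -/
noncomputable def gammaStar {V : Type*} [Fintype V] [DecidableEq V]
    (H : (V → Bool) → ℝ) : ℝ :=
  commHeight H (fun _ => false) (fun _ => true) - H (fun _ => false)


/-- A multigraph (given by its edge multiset) is connected: any two vertices are
joined by a walk along edges. -/
def MultigraphConnected {V : Type*} (E : Multiset (Sym2 V)) : Prop :=
  ∀ v w : V, Relation.ReflTransGen (fun a b => s(a, b) ∈ E) v w

open Relation

def CHSet {V : Type*} [Fintype V] [DecidableEq V] (H : (V → Bool) → ℝ) (ξ ζ : V → Bool) : Set ℝ :=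
  { M : ℝ | ∃ (k : ℕ) (γ : Fin (k+1) → (V → Bool)),
    γ 0 = ξ ∧ γ (Fin.last k) = ζ ∧
    (∀ i : Fin k, IsFlipStep (γ i.castSucc) (γ i.succ)) ∧
    M = Finset.univ.sup' ⟨0, Finset.mem_univ 0⟩ (fun i => H (γ i)) }

lemma commHeight_eq {V : Type*} [Fintype V] [DecidableEq V] (H : (V → Bool) → ℝ) (ξ ζ : V → Bool) :
    commHeight H ξ ζ = sInf (CHSet H ξ ζ) := rfl

lemma CHSet_bddBelow {V : Type*} [Fintype V] [DecidableEq V] (H : (V → Bool) → ℝ) (ξ ζ : V → Bool) :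
    BddBelow (CHSet H ξ ζ) := by
  refine ⟨H ξ, fun M hM => ?_⟩
  obtain ⟨k, γ, h0, hl, hs, rfl⟩ := hM
  have := Finset.le_sup' (fun i => H (γ i)) (Finset.mem_univ (0 : Fin (k+1)))
  rwa [h0] at this

lemma exists_path_of_chain {C : Type*} {r : C → C → Prop} {ξ ζ : C}
    (hc : ReflTransGen r ξ ζ) :
    ∃ (k : ℕ) (γ : Fin (k+1) → C), γ 0 = ξ ∧ γ (Fin.last k) = ζ ∧
      (∀ i : Fin k, r (γ i.castSucc) (γ i.succ)) := by
  induction hc with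
  | refl => exact ⟨0, fun _ => ξ, rfl, rfl, fun i => i.elim0⟩
  | @tail b c _ hbc ih =>
    obtain ⟨k, γ, h0, hl, hs⟩ := ih
    refine ⟨k+1, Fin.snoc γ c, ?_, Fin.snoc_last _ _, ?_⟩
    · have : ((0 : Fin (k+1)).castSucc) = (0 : Fin (k+2)) := rfl
      rw [← this, Fin.snoc_castSucc]; exact h0
    · intro i
      induction i using Fin.lastCases with
      | last =>
        rw [Fin.succ_last, Fin.snoc_last, Fin.snoc_castSucc, hl]
        exact hbc
      | cast j =>
        rw [Fin.succ_castSucc, Fin.snoc_castSucc, Fin.snoc_castSucc]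
        exact hs j

lemma chain_of_path {C : Type*} {r : C → C → Prop} :
    ∀ (k : ℕ) (γ : Fin (k+1) → C),
      (∀ i : Fin k, r (γ i.castSucc) (γ i.succ)) →
      ReflTransGen r (γ 0) (γ (Fin.last k)) := by
  intro k
  induction k with
  | zero => intro γ _; exact ReflTransGen.refl
  | succ k ih =>
    intro γ hs
    have tail := ih (γ ∘ Fin.succ) (fun j => by
      have := hs j.succ
      rwa [← Fin.succ_castSucc] at this)
    have h1 : (γ ∘ Fin.succ) 0 = γ ((0 : Fin (k+1)).succ) := rfl
    have h2 : (γ ∘ Fin.succ) (Fin.last k) = γ (Fin.last (k+1)) := by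
      simp [Function.comp, Fin.succ_last]
    rw [h1, h2] at tail
    have h0 : r (γ 0) (γ ((0 : Fin (k+1)).succ)) := by
      have := hs 0
      rwa [Fin.castSucc_zero] at this
    exact ReflTransGen.head h0 tail

lemma commHeight_le_of_chain {V : Type*} [Fintype V] [DecidableEq V]
    (H : (V → Bool) → ℝ) {ξ ζ : V → Bool} {M : ℝ}
    (hξ : H ξ ≤ M)
    (hc : ReflTransGen (fun σ τ => IsFlipStep σ τ ∧ H τ ≤ M) ξ ζ) :
    commHeight H ξ ζ ≤ M := by
  obtain ⟨k, γ, h0, hl, hs⟩ := exists_path_of_chain hc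
  have hbound : ∀ i : Fin (k+1), H (γ i) ≤ M := by
    intro i
    induction i using Fin.cases with
    | zero => rw [h0]; exact hξ
    | succ j => exact (hs j).2
  have hmem : Finset.univ.sup' ⟨0, Finset.mem_univ 0⟩ (fun i => H (γ i)) ∈ CHSet H ξ ζ :=
    ⟨k, γ, h0, hl, fun i => (hs i).1, rfl⟩
  calc commHeight H ξ ζ ≤ _ := csInf_le (CHSet_bddBelow H ξ ζ) hmem
    _ ≤ M := Finset.sup'_le _ _ (fun i _ => hbound i)

lemma flip_chain {V : Type*} [Fintype V] [DecidableEq V] (s : Finset V) :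
    ∀ ξ ζ : V → Bool, (∀ v ∉ s, ξ v = ζ v) →
      ReflTransGen (fun σ τ => IsFlipStep σ τ ∧ ∀ v ∉ s, τ v = ζ v) ξ ζ := by
  induction s using Finset.induction with
  | empty =>
    intro ξ ζ hag
    have : ξ = ζ := funext fun v => hag v (by simp)
    exact this ▸ ReflTransGen.refl
  | @insert a s ha ih =>
    intro ξ ζ hag
    by_cases hxa : ξ a = ζ a
    · have hag' : ∀ v ∉ s, ξ v = ζ v := by
        intro v hv
        by_cases hva : v = a
        · exact hva ▸ hxa
        · exact hag v (by simp [hva, hv])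
      exact ReflTransGen.mono (fun σ τ hst =>
        ⟨hst.1, fun v hv => hst.2 v (fun hvs => hv (Finset.mem_insert_of_mem hvs))⟩) _ _ (ih ξ ζ hag')
    · set ξ' := Function.update ξ a (ζ a) with hξ'
      have hflip : IsFlipStep ξ ξ' := by
        refine ⟨a, ?_⟩
        rw [hξ']
        congr 1
        cases hζa : ζ a <;> cases hξa : ξ a <;> simp_all
      have hag' : ∀ v ∉ s, ξ' v = ζ v := by
        intro v hv
        by_cases hva : v = a
        · subst hva; simp [hξ']
        · rw [hξ', Function.update_of_ne hva]
          exact hag v (by simp [hva, hv])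
      have tail : ReflTransGen
          (fun σ τ => IsFlipStep σ τ ∧ ∀ v ∉ insert a s, τ v = ζ v) ξ' ζ :=
        ReflTransGen.mono (fun σ τ hst =>
          ⟨hst.1, fun v hv => hst.2 v (fun hvs => hv (Finset.mem_insert_of_mem hvs))⟩) _ _ (ih ξ' ζ hag')
      refine ReflTransGen.head ⟨hflip, ?_⟩ tail
      intro v hv
      have hva : v ≠ a := fun hva => hv (hva ▸ Finset.mem_insert_self a s)
      rw [hξ', Function.update_of_ne hva]
      exact hag v hv

lemma CHSet_nonempty {V : Type*} [Fintype V] [DecidableEq V]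
    (H : (V → Bool) → ℝ) (ξ ζ : V → Bool) : (CHSet H ξ ζ).Nonempty := by
  have hc : ReflTransGen (fun σ τ : V → Bool => IsFlipStep σ τ) ξ ζ :=
    ReflTransGen.mono
      (fun σ τ hst => hst.1) _ _ (flip_chain Finset.univ ξ ζ (fun v hv => absurd (Finset.mem_univ v) hv))
  obtain ⟨k, γ, h0, hl, hs⟩ := exists_path_of_chain hc
  exact ⟨_, k, γ, h0, hl, hs, rfl⟩

lemma exists_chain_of_commHeight {V : Type*} [Fintype V] [DecidableEq V]
    (H : (V → Bool) → ℝ) (ξ ζ : V → Bool) {ε : ℝ} (hε : 0 < ε) :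
    ∃ M, M ≤ commHeight H ξ ζ + ε ∧ H ξ ≤ M ∧ H ζ ≤ M ∧
      ReflTransGen (fun σ τ => IsFlipStep σ τ ∧ H τ ≤ M) ξ ζ := by
  obtain ⟨M, hM, hlt⟩ := Real.lt_sInf_add_pos (CHSet_nonempty H ξ ζ) hε
  obtain ⟨k, γ, h0, hl, hs, rfl⟩ := hM
  refine ⟨_, le_of_lt hlt, ?_, ?_, ?_⟩
  · rw [← h0]; exact Finset.le_sup' (fun i => H (γ i)) (Finset.mem_univ 0)
  · rw [← hl]; exact Finset.le_sup' (fun i => H (γ i)) (Finset.mem_univ (Fin.last k))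
  · have hch := chain_of_path (r := fun σ τ => IsFlipStep σ τ ∧
        H τ ≤ Finset.univ.sup' ⟨0, Finset.mem_univ 0⟩ (fun i => H (γ i))) k γ
      (fun i => ⟨hs i, Finset.le_sup' (fun i => H (γ i)) (Finset.mem_univ i.succ)⟩)
    rw [h0, hl] at hch
    exact hch

lemma abs_spin (b : Bool) : |spin b| ≤ 1 := by
  cases b <;> simp [spin]

lemma abs_edgeEnergy {V : Type*} (σ : V → Bool) (e : Sym2 V) : |edgeEnergy σ e| ≤ 1 := by
  induction e using Sym2.inductionOn with
  | hf a b =>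
    rw [edgeEnergy, Sym2.lift_mk]
    calc |spin (σ a) * spin (σ b)| = |spin (σ a)| * |spin (σ b)| := abs_mul _ _
      _ ≤ 1 * 1 := mul_le_mul (abs_spin _) (abs_spin _) (abs_nonneg _) zero_le_one
      _ = 1 := one_mul 1

lemma abs_msum_le {V : Type*} (m : Multiset (Sym2 V)) (σ : V → Bool) :
    |(m.map (edgeEnergy σ)).sum| ≤ m.card := by
  induction m using Multiset.induction with
  | empty => simp
  | cons a m ih =>
    rw [Multiset.map_cons, Multiset.sum_cons, Multiset.card_cons]
    calc |edgeEnergy σ a + (m.map (edgeEnergy σ)).sum|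
        ≤ |edgeEnergy σ a| + |(m.map (edgeEnergy σ)).sum| := abs_add_le _ _
      _ ≤ 1 + m.card := add_le_add (abs_edgeEnergy _ _) ih
      _ ≤ (m.card + 1 : ℕ) := by push_cast; linarith

lemma map_edgeEnergy_comp {V W : Type*} (ι : V → W) (E : Multiset (Sym2 V)) (τ : W → Bool) :
    ((E.map (Sym2.map ι)).map (edgeEnergy τ)).sum = (E.map (edgeEnergy (τ ∘ ι))).sum := by
  rw [Multiset.map_map]
  congr 1
  apply Multiset.map_congr rfl
  intro e _
  induction e using Sym2.inductionOn with
  | hf a b => simp [edgeEnergy, Sym2.map_pair_eq, Function.comp]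

lemma hsplit {V W : Type*} [Fintype V] [DecidableEq V] [Fintype W] [DecidableEq W]
    (J h : ℝ) (E : Multiset (Sym2 V)) (E' : Multiset (Sym2 W))
    (ι : V → W) (hι : Function.Injective ι) (τ : W → Bool) :
    hamiltonian J h E' τ = hamiltonian J h E (τ ∘ ι)
      + (-(J/2) * (((E' - E.map (Sym2.map ι)).map (edgeEnergy τ)).sum
          - ((E.map (Sym2.map ι) - E').map (edgeEnergy τ)).sum)
        - (h/2) * ∑ w ∈ (Finset.univ.image ι)ᶜ, spin (τ w)) := by
  set A := E.map (Sym2.map ι) with hA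
  have hsum1 : (E'.map (edgeEnergy τ)).sum
      = ((E' - A).map (edgeEnergy τ)).sum + ((E' ∩ A).map (edgeEnergy τ)).sum := by
    conv_lhs => rw [← Multiset.sub_add_inter E' A]
    rw [Multiset.map_add, Multiset.sum_add]
  have hsum2 : (E.map (edgeEnergy (τ ∘ ι))).sum
      = ((A - E').map (edgeEnergy τ)).sum + ((E' ∩ A).map (edgeEnergy τ)).sum := by
    rw [← map_edgeEnergy_comp ι E τ, ← hA]
    conv_lhs => rw [← Multiset.sub_add_inter A E']
    rw [Multiset.map_add, Multiset.sum_add, Multiset.inter_comm]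
  have hfield : ∑ w, spin (τ w)
      = ∑ v, spin ((τ ∘ ι) v) + ∑ w ∈ (Finset.univ.image ι)ᶜ, spin (τ w) := by
    rw [← Finset.sum_add_sum_compl (Finset.univ.image ι) (fun w => spin (τ w))]
    congr 1
    rw [Finset.sum_image (fun x _ y _ hxy => hι hxy)]
    rfl
  rw [hamiltonian, hamiltonian, hsum1, hsum2, hfield]
  ring

lemma main_bound {V W : Type*} [Fintype V] [DecidableEq V] [Fintype W] [DecidableEq W]
    (J h : ℝ) (hJ : 0 < J) (hh : 0 < h)
    (E : Multiset (Sym2 V)) (E' : Multiset (Sym2 W))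
    (hcard : Fintype.card V ≤ Fintype.card W)
    (ι : V → W) (hι : Function.Injective ι) (k : ℕ)
    (hk : ((E' - E.map (Sym2.map ι)) + (E.map (Sym2.map ι) - E')).card ≤ k)
    (τ : W → Bool) :
    |(hamiltonian J h E' τ - hamiltonian J h E' (fun _ => false))
      - (hamiltonian J h E (τ ∘ ι) - hamiltonian J h E (fun _ => false))| ≤
      J * k + h * ((Fintype.card W : ℝ) - Fintype.card V) := by
  have hcomp : ((fun _ => false) : W → Bool) ∘ ι = (fun _ => false) := rfl
  have h1 := hsplit J h E E' ι hι τ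
  have h2 := hsplit J h E E' ι hι (fun _ => false)
  rw [hcomp] at h2
  set A := E.map (Sym2.map ι) with hA
  set c1 := (E' - A).card with hc1
  set c2 := (A - E').card with hc2
  have hkk : (c1 : ℝ) + c2 ≤ k := by
    rw [hc1, hc2]
    have : Multiset.card (E' - A) + Multiset.card (A - E') ≤ k := by
      rw [← Multiset.card_add]; exact hk
    exact_mod_cast this
  have hS : ∀ σ : W → Bool,
      |((E' - A).map (edgeEnergy σ)).sum - ((A - E').map (edgeEnergy σ)).sum| ≤ c1 + c2 := by
    intro σ
    calc |((E' - A).map (edgeEnergy σ)).sum - ((A - E').map (edgeEnergy σ)).sum|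
        ≤ |((E' - A).map (edgeEnergy σ)).sum| + |((A - E').map (edgeEnergy σ)).sum| :=
          abs_sub _ _
      _ ≤ (c1 : ℝ) + c2 := add_le_add (abs_msum_le _ _) (abs_msum_le _ _)
  have hcardc : ((Finset.univ.image ι)ᶜ.card : ℝ)
      = (Fintype.card W : ℝ) - Fintype.card V := by
    rw [Finset.card_compl, Finset.card_image_of_injective _ hι, Finset.card_univ,
      Nat.cast_sub hcard]
  have hT : ∀ σ : W → Bool, |∑ w ∈ (Finset.univ.image ι)ᶜ, spin (σ w)|
      ≤ (Fintype.card W : ℝ) - Fintype.card V := by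
    intro σ
    calc |∑ w ∈ (Finset.univ.image ι)ᶜ, spin (σ w)|
        ≤ ∑ w ∈ (Finset.univ.image ι)ᶜ, |spin (σ w)| := Finset.abs_sum_le_sum_abs _ _
      _ ≤ ∑ _w ∈ (Finset.univ.image ι)ᶜ, (1:ℝ) := Finset.sum_le_sum (fun w _ => abs_spin _)
      _ = ((Finset.univ.image ι)ᶜ.card : ℝ) := by simp
      _ = _ := hcardc
  have e1 := hS τ
  have e2 := hS (fun _ => false)
  have e3 := hT τ
  have e4 := hT (fun _ => false)
  rw [h1, h2]
  rw [abs_le] at e1 e2 e3 e4 ⊢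
  constructor <;> nlinarith [e1.1, e1.2, e2.1, e2.2, e3.1, e3.2, e4.1, e4.2, hJ.le, hh.le, hkk]

open scoped Classical in
noncomputable def extConf {V W : Type*} (ι : V → W) (σ : V → Bool) (w : W) : Bool :=
  if h : ∃ v, ι v = w then σ h.choose else false

lemma extConf_apply {V W : Type*} (ι : V → W) (hι : Function.Injective ι)
    (σ : V → Bool) (v : V) : extConf ι σ (ι v) = σ v := by
  classical
  rw [extConf, dif_pos ⟨v, rfl⟩]
  congr 1
  exact hι (Exists.choose_spec (⟨v, rfl⟩ : ∃ u, ι u = ι v))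

lemma extConf_comp {V W : Type*} (ι : V → W) (hι : Function.Injective ι)
    (σ : V → Bool) : extConf ι σ ∘ ι = σ :=
  funext fun v => extConf_apply ι hι σ v

lemma extConf_not_mem {V W : Type*} (ι : V → W) (σ : V → Bool) {w : W}
    (hw : ¬ ∃ v, ι v = w) : extConf ι σ w = false := by
  classical
  rw [extConf, dif_neg hw]

lemma extConf_bot {V W : Type*} (ι : V → W) :
    extConf ι (fun _ : V => false) = (fun _ : W => false) := by
  funext w
  unfold extConf
  split <;> rfl

lemma extConf_update {V W : Type*} [DecidableEq V] [DecidableEq W]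
    (ι : V → W) (hι : Function.Injective ι) (σ : V → Bool) (v : V) (b : Bool) :
    extConf ι (Function.update σ v b) = Function.update (extConf ι σ) (ι v) b := by
  funext w
  by_cases hw : ∃ u, ι u = w
  · obtain ⟨u, rfl⟩ := hw
    by_cases huv : u = v
    · subst huv
      rw [extConf_apply ι hι, Function.update_self, Function.update_self]
    · rw [extConf_apply ι hι, Function.update_of_ne huv,
        Function.update_of_ne (fun hh => huv (hι hh)), extConf_apply ι hι]
  · have hwv : w ≠ ι v := fun hh => hw ⟨v, hh.symm⟩
    rw [extConf_not_mem ι _ hw, Function.update_of_ne hwv, extConf_not_mem ι _ hw]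

section Transfer

variable {V W : Type*} [Fintype V] [DecidableEq V] [Fintype W] [DecidableEq W]
  (J h : ℝ) (E : Multiset (Sym2 V)) (E' : Multiset (Sym2 W))
  (ι : V → W) (k : ℕ)

lemma gamma_restrict (hι : Function.Injective ι) (hJ : 0 < J) (hh : 0 < h)
    (hcard : Fintype.card V ≤ Fintype.card W)
    (hk : ((E' - E.map (Sym2.map ι)) + (E.map (Sym2.map ι) - E')).card ≤ k) :
    gammaStar (hamiltonian J h E) ≤ gammaStar (hamiltonian J h E')
      + (J * k + h * ((Fintype.card W : ℝ) - Fintype.card V)) := by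
  set HV := hamiltonian J h E with hHV
  set HW := hamiltonian J h E' with hHW
  set C := J * k + h * ((Fintype.card W : ℝ) - Fintype.card V) with hC
  have hC0 : 0 ≤ C := by
    have h1 : (Fintype.card V : ℝ) ≤ (Fintype.card W : ℝ) := Nat.cast_le.mpr hcard
    have h2 : (0:ℝ) ≤ k := Nat.cast_nonneg k
    rw [hC]; nlinarith
  apply le_of_forall_pos_le_add
  intro ε hε
  obtain ⟨M, hMle, hbot, _htop, hch⟩ :=
    exists_chain_of_commHeight HW (fun _ => false) (fun _ => true) hε
  set M' := M - HW (fun _ => false) + HV (fun _ => false) + C with hM'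
  have key : ∀ τ : W → Bool, HW τ ≤ M → HV (τ ∘ ι) ≤ M' := by
    intro τ hτ
    have hmb := main_bound J h hJ hh E E' hcard ι hι k hk τ
    rw [← hHV, ← hHW, ← hC] at hmb
    rw [abs_le] at hmb
    rw [hM']
    linarith [hmb.1]
  have transfer : ∀ {τ τ' : W → Bool},
      Relation.ReflTransGen (fun σ τ => IsFlipStep σ τ ∧ HW τ ≤ M) τ τ' →
      Relation.ReflTransGen (fun σ τ => IsFlipStep σ τ ∧ HV τ ≤ M') (τ ∘ ι) (τ' ∘ ι) := by
    intro τ τ' hc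
    induction hc with
    | refl => exact Relation.ReflTransGen.refl
    | @tail b c _ hbc ih =>
      obtain ⟨⟨w, hw⟩, hb⟩ := hbc
      by_cases hwr : ∃ v, ι v = w
      · obtain ⟨v, rfl⟩ := hwr
        refine ih.tail ⟨⟨v, ?_⟩, key c hb⟩
        rw [hw]
        exact Function.update_comp_eq_of_injective b hι v _
      · have hcb : c ∘ ι = b ∘ ι := by
          funext v
          show c (ι v) = b (ι v)
          rw [hw]
          exact Function.update_of_ne (fun hh => hwr ⟨v, hh⟩) _ _
        rw [hcb]
        exact ih
  have hcomm : commHeight HV (fun _ => false) (fun _ => true) ≤ M' := by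
    apply commHeight_le_of_chain
    · have : HW (fun _ => false) ≤ M := hbot
      rw [hM']; linarith
    · exact transfer hch
  rw [gammaStar, gammaStar]
  have : HW (fun _ => false) ≤ M := hbot
  rw [hM'] at hcomm
  linarith [hMle, hcomm]

lemma gamma_extend (hι : Function.Injective ι) (hJ : 0 < J) (hh : 0 < h)
    (hcard : Fintype.card V ≤ Fintype.card W)
    (hk : ((E' - E.map (Sym2.map ι)) + (E.map (Sym2.map ι) - E')).card ≤ k) :
    gammaStar (hamiltonian J h E') ≤ gammaStar (hamiltonian J h E)
      + (J * k + h * ((Fintype.card W : ℝ) - Fintype.card V)) := by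
  set HV := hamiltonian J h E with hHV
  set HW := hamiltonian J h E' with hHW
  set C := J * k + h * ((Fintype.card W : ℝ) - Fintype.card V) with hC
  have hC0 : 0 ≤ C := by
    have h1 : (Fintype.card V : ℝ) ≤ (Fintype.card W : ℝ) := Nat.cast_le.mpr hcard
    have h2 : (0:ℝ) ≤ k := Nat.cast_nonneg k
    rw [hC]; nlinarith
  apply le_of_forall_pos_le_add
  intro ε hε
  obtain ⟨M, hMle, hbot, htop, hch⟩ :=
    exists_chain_of_commHeight HV (fun _ => false) (fun _ => true) hε
  set M' := M - HV (fun _ => false) + HW (fun _ => false) + C with hM'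
  have key : ∀ τ : W → Bool, HV (τ ∘ ι) ≤ M → HW τ ≤ M' := by
    intro τ hτ
    have hmb := main_bound J h hJ hh E E' hcard ι hι k hk τ
    rw [← hHV, ← hHW, ← hC] at hmb
    rw [abs_le] at hmb
    rw [hM']
    linarith [hmb.2]
  have phase1 : Relation.ReflTransGen (fun σ τ => IsFlipStep σ τ ∧ HW τ ≤ M')
      (extConf ι (fun _ => false)) (extConf ι (fun _ => true)) := by
    refine Relation.ReflTransGen.lift (extConf ι) (fun a b hab => ?_) _ _ hch
    obtain ⟨⟨v, hv⟩, hb⟩ := hab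
    refine ⟨⟨ι v, ?_⟩, key (extConf ι b) (by rw [extConf_comp ι hι]; exact hb)⟩
    rw [hv, extConf_update ι hι, extConf_apply ι hι]
  have phase2 : Relation.ReflTransGen (fun σ τ => IsFlipStep σ τ ∧ HW τ ≤ M')
      (extConf ι (fun _ => true)) (fun _ => true) := by
    have hag : ∀ w ∉ (Finset.univ.image ι)ᶜ, extConf ι (fun _ : V => true) w = true := by
      intro w hw
      rw [Finset.mem_compl, not_not, Finset.mem_image] at hw
      obtain ⟨v, _, rfl⟩ := hw
      exact extConf_apply ι hι _ v
    refine ReflTransGen.mono (fun σ τ hst => ?_) _ _ (flip_chain ((Finset.univ.image ι)ᶜ) _ (fun _ => true) hag)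
    obtain ⟨hflip, hτ⟩ := hst
    refine ⟨hflip, key τ ?_⟩
    have hτι : τ ∘ ι = (fun _ => true) := by
      funext v
      exact hτ (ι v) (by simp)
    rw [hτι]
    exact htop
  have hcomm : commHeight HW (fun _ => false) (fun _ => true) ≤ M' := by
    apply commHeight_le_of_chain
    · have : HV (fun _ => false) ≤ M := hbot
      rw [hM']; linarith
    · have := phase1.trans phase2
      rwa [extConf_bot] at this
  rw [gammaStar, gammaStar]
  have : HV (fun _ => false) ≤ M := hbot
  rw [hM'] at hcomm
  linarith [hMle, hcomm]

end Transfer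

/-- Let `J > 0`, `h > 0`, let `G = (V,E)` and `G̃ = (Ṽ,Ẽ)` be finite connected
multigraphs with `|Ṽ| ≥ |V|`, and let `ι : V → Ṽ` be an injection such that the
symmetric difference of `Ẽ` and the image of `E` under `ι` contains at most `k`
edges (counted with multiplicity). Then
`|Γ*(G) − Γ*(G̃)| ≤ J·k + h·(|Ṽ| − |V|)`. -/
theorem stmt2 {V W : Type*} [Fintype V] [DecidableEq V] [Fintype W] [DecidableEq W]
    (J h : ℝ) (hJ : 0 < J) (hh : 0 < h)
    (E : Multiset (Sym2 V)) (E' : Multiset (Sym2 W))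
    (hconn : MultigraphConnected E) (hconn' : MultigraphConnected E')
    (hcard : Fintype.card V ≤ Fintype.card W)
    (ι : V → W) (hι : Function.Injective ι) (k : ℕ)
    (hk : ((E' - E.map (Sym2.map ι)) + (E.map (Sym2.map ι) - E')).card ≤ k) :
    |gammaStar (hamiltonian J h E) - gammaStar (hamiltonian J h E')| ≤
      J * k + h * ((Fintype.card W : ℝ) - Fintype.card V) := by
  have g1 := gamma_restrict J h E E' ι k hι hJ hh hcard hk
  have g2 := gamma_extend J h E E' ι k hι hJ hh hcard hk
  rw [abs_le]
  constructor <;> linarith
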